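/- Let a, b, λ, q be complex numbers with |q| < 1 and 1 + bq^j ≠ 0 for all integers j ≥ 1, and suppose G(aq, b, λq) ≠ 0. Then the continued fraction with b₀ = 1, all partial denominators bₙ = 1 (n ≥ 1), and partial numerators a_{2n-1} = aqⁿ + λq^{2n-1} and a_{2n} = bqⁿ + λq^{2n} (n ≥ 1) converges to G(a, b, λ) / G(aq, b, λq); that is, the approximants Aₙ/Bₙ tend to G(a,b,λ)/G(aq,b,λq) as n → ∞. -/

import Mathlib

/-- Numerator convergents: `cfNum a b (n+1)` is `Aₙ`, with `A₋₁ = cfNum a b 0 = 1`. -/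
noncomputable def cfNum (a b : ℕ → ℂ) : ℕ → ℂ
  | 0 => 1
  | 1 => b 0
  | n + 2 => b (n + 1) * cfNum a b (n + 1) + a (n + 1) * cfNum a b n

/-- Denominator convergents: `cfDen a b (n+1)` is `Bₙ`, with `B₋₁ = cfDen a b 0 = 0`. -/
noncomputable def cfDen (a b : ℕ → ℂ) : ℕ → ℂ
  | 0 => 0
  | 1 => 1
  | n + 2 => b (n + 1) * cfDen a b (n + 1) + a (n + 1) * cfDen a b n

/-- The continued fraction `b₀ + K(aₙ/bₙ)` converges to `f`: the approximants
`Aₙ/Bₙ` tend to `f` as `n → ∞`. -/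
def CFConvergesTo (a b : ℕ → ℂ) (f : ℂ) : Prop :=
  Filter.Tendsto (fun n => cfNum a b (n + 1) / cfDen a b (n + 1)) Filter.atTop (nhds f)

/-- Ramanujan's function `G(a, b, λ) = G(a, λ; b; q)`. -/
noncomputable def G (q a b l : ℂ) : ℂ :=
  ∑' n : ℕ, q ^ (n * (n + 1) / 2) * (∏ k ∈ Finset.range n, (a + l * q ^ k)) /
    ((∏ j ∈ Finset.range n, (1 - q ^ (j + 1))) * ∏ j ∈ Finset.range n, (1 + b * q ^ (j + 1)))

namespace RamanujanCF
open Filter Finset Topology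

noncomputable def gT (q A B L : ℂ) (n : ℕ) : ℂ :=
  q ^ (n * (n + 1) / 2) * (∏ k ∈ Finset.range n, (A + L * q ^ k)) /
    ((∏ j ∈ Finset.range n, (1 - q ^ (j + 1))) * ∏ j ∈ Finset.range n, (1 + B * q ^ (j + 1)))

lemma G_eq (q A B L : ℂ) : G q A B L = ∑' n, gT q A B L n := rfl

lemma gT_zero (q A B L : ℂ) : gT q A B L 0 = 1 := by simp [gT]

lemma tri_succ (n : ℕ) : (n+1) * ((n+1) + 1) / 2 = n * (n+1) / 2 + (n+1) := by
  have h : (n+1)*((n+1)+1) = n*(n+1) + 2*(n+1) := by ring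
  rw [h, Nat.add_mul_div_left _ _ (by norm_num : 0 < 2)]
lemma prodc {f g : ℕ → ℂ} (m : ℕ) (h : ∀ k, k < m → f k = g k) :
    ∏ k ∈ Finset.range m, f k = ∏ k ∈ Finset.range m, g k :=
  Finset.prod_congr rfl (fun k hk => h k (Finset.mem_range.mp hk))
lemma one_sub_pow_ne (q : ℂ) (hq : ‖q‖ < 1) (j : ℕ) : (1:ℂ) - q^(j+1) ≠ 0 := by
  intro h
  have : q^(j+1) = 1 := by linear_combination -h
  have : ‖q^(j+1)‖ = 1 := by rw [this, norm_one]
  rw [norm_pow] at this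
  nlinarith [pow_le_pow_of_le_one (norm_nonneg q) hq.le (by omega : 1 ≤ j+1),
    pow_one ‖q‖, norm_nonneg q]

section identities
variable (q a b l : ℂ)

-- product building blocks
lemma pnum (m : ℕ) : ∏ k ∈ Finset.range (m+1), (a + l*q^k)
    = (∏ k ∈ Finset.range m, (a+l*(q^k*q))) * (a+l) := by
  rw [Finset.prod_range_succ',
    prodc m (f := fun k => a + l*q^(k+1)) (g := fun k => a + l*(q^k*q)) (fun k _ => by ring)]
  norm_num

lemma pnumq (m : ℕ) : ∏ k ∈ Finset.range (m+1), (a*q + l*q*q^k)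
    = q^m*q*((∏ k ∈ Finset.range m, (a+l*(q^k*q))) * (a+l)) := by
  rw [prodc (m+1) (f := fun k => a*q + l*q*q^k) (g := fun k => q * (a + l*q^k)) (fun k _ => by ring),
    Finset.prod_mul_distrib, Finset.prod_const, Finset.card_range, pnum, pow_succ]

lemma pnum2 (m : ℕ) : ∏ k ∈ Finset.range m, (a*q + l*q^2*q^k)
    = q^m * ∏ k ∈ Finset.range m, (a+l*(q^k*q)) := by
  rw [prodc m (f := fun k => a*q + l*q^2*q^k) (g := fun k => q * (a + l*(q^k*q))) (fun k _ => by ring),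
    Finset.prod_mul_distrib, Finset.prod_const, Finset.card_range]

lemma pnum2s (m : ℕ) : ∏ k ∈ Finset.range (m+1), (a*q + l*q^2*q^k)
    = q^m*q*((∏ k ∈ Finset.range m, (a+l*(q^k*q))) * (a+l*(q^m*q))) := by
  rw [Finset.prod_range_succ, pnum2, show a*q + l*q^2*q^m = q*(a+l*(q^m*q)) by ring]
  ring

lemma pnuml (m : ℕ) : ∏ k ∈ Finset.range (m+1), (a + l*q*q^k)
    = (∏ k ∈ Finset.range m, (a+l*(q^k*q))) * (a+l*(q^m*q)) := by
  rw [Finset.prod_range_succ,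
    prodc m (f := fun k => a + l*q*q^k) (g := fun k => a + l*(q^k*q)) (fun k _ => by ring)]
  ring

lemma pd1 (m : ℕ) : ∏ j ∈ Finset.range (m+1), ((1:ℂ) - q^(j+1))
    = (∏ j ∈ Finset.range m, (1-q^(j+1))) * (1-q^m*q) := by
  rw [Finset.prod_range_succ, pow_succ]

lemma pdb (m : ℕ) : ∏ j ∈ Finset.range (m+1), ((1:ℂ) + b*q^(j+1))
    = (∏ j ∈ Finset.range m, (1+b*(q^(j+1)*q))) * (1+b*q) := by
  rw [Finset.prod_range_succ',
    prodc m (f := fun j => 1 + b*q^(j+1+1)) (g := fun j => 1 + b*(q^(j+1)*q)) (fun j _ => by ring)]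
  norm_num

lemma pdbq (m : ℕ) : ∏ j ∈ Finset.range m, ((1:ℂ) + b*q*q^(j+1))
    = ∏ j ∈ Finset.range m, (1+b*(q^(j+1)*q)) :=
  prodc m (fun j _ => by ring)

lemma pdbqs (m : ℕ) : ∏ j ∈ Finset.range (m+1), ((1:ℂ) + b*q*q^(j+1))
    = (∏ j ∈ Finset.range m, (1+b*(q^(j+1)*q))) * (1+b*(q^m*q*q)) := by
  rw [Finset.prod_range_succ, pdbq, show b*q*q^(m+1) = b*(q^m*q*q) by ring]

lemma W1 (hq : ‖q‖ < 1) (hb : ∀ j : ℕ, 1 ≤ j → 1 + b * q ^ j ≠ 0) (m : ℕ) :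
    gT q a b l (m+1) = gT q (a*q) b (l*q) (m+1)
      + ((a+l)*q/(1+b*q)) * gT q (a*q) (b*q) (l*q^2) m := by
  unfold gT
  rw [pnum, pnumq, pnum2, pd1, pdb, pdbq, tri_succ, pow_add, pow_succ]
  have hD : (∏ j ∈ Finset.range m, ((1:ℂ)-q^(j+1))) ≠ 0 :=
    Finset.prod_ne_zero_iff.mpr (fun j _ => one_sub_pow_ne q hq j)
  have hF : (∏ j ∈ Finset.range m, ((1:ℂ)+b*(q^(j+1)*q))) ≠ 0 := by
    apply Finset.prod_ne_zero_iff.mpr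
    intro j _
    rw [show b*(q^(j+1)*q) = b*q^(j+2) by ring]
    exact hb (j+2) (by omega)
  have hd1 : (1:ℂ) - q^m*q ≠ 0 := by
    have := one_sub_pow_ne q hq m; rwa [pow_succ] at this
  have hb1 : (1:ℂ) + b*q ≠ 0 := by
    have := hb 1 le_rfl; rwa [pow_one] at this
  field_simp
  ring

lemma W2 (hq : ‖q‖ < 1) (hb : ∀ j : ℕ, 1 ≤ j → 1 + b * q ^ j ≠ 0) (m : ℕ) :
    (1+b*q) * gT q a b l (m+1) = gT q a (b*q) (l*q) (m+1)
      + b*q * gT q (a*q) (b*q) (l*q^2) (m+1) + l*q * gT q (a*q) (b*q) (l*q^2) m := by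
  unfold gT
  rw [pnum, pnuml, pnum2s, pnum2, pd1, pdb, pdbqs, pdbq, tri_succ, pow_add, pow_succ]
  have hD : (∏ j ∈ Finset.range m, ((1:ℂ)-q^(j+1))) ≠ 0 :=
    Finset.prod_ne_zero_iff.mpr (fun j _ => one_sub_pow_ne q hq j)
  have hF : (∏ j ∈ Finset.range m, ((1:ℂ)+b*(q^(j+1)*q))) ≠ 0 := by
    apply Finset.prod_ne_zero_iff.mpr
    intro j _
    rw [show b*(q^(j+1)*q) = b*q^(j+2) by ring]
    exact hb (j+2) (by omega)
  have hd1 : (1:ℂ) - q^m*q ≠ 0 := by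
    have := one_sub_pow_ne q hq m; rwa [pow_succ] at this
  have hb1 : (1:ℂ) + b*q ≠ 0 := by
    have := hb 1 le_rfl; rwa [pow_one] at this
  have hc2 : (1:ℂ) + b*(q^m*q*q) ≠ 0 := by
    rw [show b*(q^m*q*q) = b*q^(m+2) by ring]
    exact hb (m+2) (by omega)
  simp only [mul_div_assoc']
  rw [← add_div, div_add_div _ _ (by simp [*]) (by simp [*]),
    div_eq_div_iff (by simp [*]) (by simp [*])]
  ring
end identities


lemma gT_succ (q A B L : ℂ) (n : ℕ) :
    gT q A B L (n+1) =
      (q ^ (n+1) * (A + L * q ^ n) / ((1 - q ^ (n+1)) * (1 + B * q ^ (n+1)))) * gT q A B L n := by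
  unfold gT
  rw [Finset.prod_range_succ, Finset.prod_range_succ, Finset.prod_range_succ, tri_succ, pow_add]
  simp only [div_eq_mul_inv, mul_inv]
  ring

lemma one_sub_norm_le' (w : ℂ) : 1 - ‖w‖ ≤ ‖1 + w‖ := by
  calc 1 - ‖w‖ = ‖(1:ℂ)‖ - ‖-w‖ := by simp
  _ ≤ ‖1 - -w‖ := norm_sub_norm_le _ _
  _ = ‖1 + w‖ := by rw [sub_neg_eq_add]

lemma summable_norm_gT (q A B L : ℂ) (hq : ‖q‖ < 1) :
    Summable (fun n => ‖gT q A B L n‖) := by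
  have hq0 : 0 ≤ ‖q‖ := norm_nonneg q
  apply summable_of_ratio_norm_eventually_le (r := 1/2) (by norm_num)
  -- eventually bounds
  have h1 : Tendsto (fun n : ℕ => ‖B‖ * ‖q‖ ^ (n+1)) atTop (𝓝 0) := by
    have := (tendsto_pow_atTop_nhds_zero_of_lt_one hq0 hq).const_mul ‖B‖
    simpa [Function.comp_def] using this.comp (tendsto_add_atTop_nat 1)
  have h2 : Tendsto (fun n : ℕ => ‖q‖ ^ (n+1) * (‖A‖ + ‖L‖)) atTop (𝓝 0) := by
    have := (tendsto_pow_atTop_nhds_zero_of_lt_one hq0 hq).mul_const (‖A‖ + ‖L‖)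
    simpa [Function.comp_def] using this.comp (tendsto_add_atTop_nat 1)
  have e1 : ∀ᶠ n : ℕ in atTop, ‖B‖ * ‖q‖ ^ (n+1) ≤ 1/2 :=
    h1.eventually (eventually_le_nhds (by norm_num))
  have e2 : ∀ᶠ n : ℕ in atTop, ‖q‖ ^ (n+1) * (‖A‖ + ‖L‖) ≤ (1/2) * ((1 - ‖q‖) * (1/2)) :=
    h2.eventually (eventually_le_nhds (by nlinarith [norm_nonneg q]))
  filter_upwards [e1, e2] with n hn1 hn2
  rw [Real.norm_eq_abs, Real.norm_eq_abs, abs_norm, abs_norm, gT_succ, norm_mul]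
  have hden1 : (1 : ℝ) - ‖q‖ ≤ ‖1 - q ^ (n+1)‖ := by
    have h := one_sub_norm_le' (-(q ^ (n+1)))
    rw [norm_neg] at h
    have : ‖q ^ (n+1)‖ ≤ ‖q‖ := by
      rw [norm_pow]
      calc ‖q‖^(n+1) ≤ ‖q‖^1 := pow_le_pow_of_le_one hq0 hq.le (by omega)
      _ = ‖q‖ := pow_one _
    have h2 : (1:ℝ) - ‖q‖ ≤ 1 - ‖q^(n+1)‖ := by linarith
    calc (1:ℝ) - ‖q‖ ≤ 1 - ‖q^(n+1)‖ := h2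
    _ ≤ ‖1 + -(q^(n+1))‖ := h
    _ = ‖1 - q^(n+1)‖ := by ring_nf
  have hden2 : (1 : ℝ)/2 ≤ ‖1 + B * q ^ (n+1)‖ := by
    have h := one_sub_norm_le' (B * q ^ (n+1))
    have : ‖B * q^(n+1)‖ ≤ 1/2 := by
      rw [norm_mul, norm_pow]; exact hn1
    linarith
  have hcoef : ‖q ^ (n+1) * (A + L * q ^ n) / ((1 - q ^ (n+1)) * (1 + B * q ^ (n+1)))‖ ≤ 1/2 := by
    rw [norm_div, norm_mul, norm_mul]
    have hnum : ‖q ^ (n+1)‖ * ‖A + L * q ^ n‖ ≤ ‖q‖^(n+1) * (‖A‖ + ‖L‖) := by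
      rw [norm_pow]
      apply mul_le_mul_of_nonneg_left _ (by positivity)
      calc ‖A + L * q ^ n‖ ≤ ‖A‖ + ‖L * q ^ n‖ := norm_add_le _ _
      _ = ‖A‖ + ‖L‖ * ‖q‖^n := by rw [norm_mul, norm_pow]
      _ ≤ ‖A‖ + ‖L‖ * 1 := by
          gcongr
          exact pow_le_one₀ hq0 hq.le
      _ = ‖A‖ + ‖L‖ := by ring
    have hdpos : (0:ℝ) < (1 - ‖q‖) * (1/2) := by nlinarith
    have hden : (1 - ‖q‖) * (1/2) ≤ ‖1 - q ^ (n+1)‖ * ‖1 + B * q ^ (n+1)‖ := by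
      apply mul_le_mul hden1 hden2 (by norm_num) (norm_nonneg _)
    rw [div_le_iff₀ (lt_of_lt_of_le hdpos hden)]
    calc ‖q ^ (n+1)‖ * ‖A + L * q ^ n‖ ≤ ‖q‖^(n+1) * (‖A‖ + ‖L‖) := hnum
    _ ≤ (1/2) * ((1 - ‖q‖) * (1/2)) := hn2
    _ ≤ 1/2 * (‖1 - q ^ (n+1)‖ * ‖1 + B * q ^ (n+1)‖) := by
        apply mul_le_mul_of_nonneg_left hden (by norm_num)
  calc ‖q ^ (n+1) * (A + L * q ^ n) / ((1 - q ^ (n+1)) * (1 + B * q ^ (n+1)))‖ * ‖gT q A B L n‖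
      ≤ 1/2 * ‖gT q A B L n‖ := by
        apply mul_le_mul_of_nonneg_right hcoef (norm_nonneg _)

lemma summable_gT (q A B L : ℂ) (hq : ‖q‖ < 1) : Summable (gT q A B L) :=
  (summable_norm_gT q A B L hq).of_norm

lemma id1 (q a b l : ℂ) (hq : ‖q‖ < 1) (hb : ∀ j : ℕ, 1 ≤ j → 1 + b * q ^ j ≠ 0) :
    G q a b l = G q (a*q) b (l*q)
      + ((a+l)*q/(1+b*q)) * G q (a*q) (b*q) (l*q^2) := by
  have hf := summable_gT q a b l hq
  have hh := summable_gT q (a*q) b (l*q) hq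
  have he := summable_gT q (a*q) (b*q) (l*q^2) hq
  have hh1 : Summable (fun n => gT q (a*q) b (l*q) (n+1)) := (summable_nat_add_iff 1).mpr hh
  rw [G_eq, G_eq, G_eq, Summable.tsum_eq_zero_add hf, Summable.tsum_eq_zero_add hh]
  have : ∑' n, gT q a b l (n+1)
      = ∑' n, (gT q (a*q) b (l*q) (n+1) + ((a+l)*q/(1+b*q)) * gT q (a*q) (b*q) (l*q^2) n) :=
    tsum_congr (fun n => W1 q a b l hq hb n)
  rw [this, Summable.tsum_add hh1 (he.mul_left _), tsum_mul_left, gT_zero, gT_zero]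
  ring

lemma id2 (q a b l : ℂ) (hq : ‖q‖ < 1) (hb : ∀ j : ℕ, 1 ≤ j → 1 + b * q ^ j ≠ 0) :
    (1+b*q) * G q a b l = G q a (b*q) (l*q) + (b+l)*q * G q (a*q) (b*q) (l*q^2) := by
  have hf := summable_gT q a b l hq
  have hs2 := summable_gT q a (b*q) (l*q) hq
  have hs4 := summable_gT q (a*q) (b*q) (l*q^2) hq
  have hs2s : Summable (fun n => gT q a (b*q) (l*q) (n+1)) := (summable_nat_add_iff 1).mpr hs2
  have hs4s : Summable (fun n => gT q (a*q) (b*q) (l*q^2) (n+1)) := (summable_nat_add_iff 1).mpr hs4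
  rw [G_eq, G_eq, G_eq, Summable.tsum_eq_zero_add hf, Summable.tsum_eq_zero_add hs2,
    Summable.tsum_eq_zero_add hs4, mul_add, ← tsum_mul_left (a := 1+b*q)]
  have : ∑' n, (1+b*q) * gT q a b l (n+1)
      = ∑' n, (gT q a (b*q) (l*q) (n+1) + (b*q * gT q (a*q) (b*q) (l*q^2) (n+1)
          + l*q * gT q (a*q) (b*q) (l*q^2) n)) :=
    tsum_congr (fun n => by rw [W2 q a b l hq hb n]; ring)
  rw [this, Summable.tsum_add hs2s ((hs4s.mul_left _).add (hs4.mul_left _)),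
    Summable.tsum_add (hs4s.mul_left _) (hs4.mul_left _), tsum_mul_left, tsum_mul_left,
    Summable.tsum_eq_zero_add hs4, gT_zero, gT_zero, gT_zero]
  ring

lemma weier (s : Finset ℕ) (x : ℕ → ℝ) (h0 : ∀ i ∈ s, 0 ≤ x i) (h1 : ∀ i ∈ s, x i ≤ 1) :
    1 - ∑ i ∈ s, x i ≤ ∏ i ∈ s, (1 - x i) := by
  classical
  induction s using Finset.cons_induction with
  | empty => simp
  | cons a s ha ih =>
    rw [Finset.prod_cons, Finset.sum_cons]
    have h0' : ∀ i ∈ s, 0 ≤ x i := fun i hi => h0 i (Finset.mem_cons_of_mem hi)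
    have h1' : ∀ i ∈ s, x i ≤ 1 := fun i hi => h1 i (Finset.mem_cons_of_mem hi)
    have ih' := ih h0' h1'
    have hs0 : 0 ≤ ∑ i ∈ s, x i := Finset.sum_nonneg h0'
    have hp0 : (0:ℝ) ≤ ∏ i ∈ s, (1 - x i) :=
      Finset.prod_nonneg (fun i hi => by linarith [h1' i hi])
    have ha0 := h0 a (Finset.mem_cons_self a s)
    have ha1 := h1 a (Finset.mem_cons_self a s)
    nlinarith

lemma geo_le (r : ℝ) (hr0 : 0 ≤ r) (hr1 : r < 1) (n : ℕ) :
    ∑ i ∈ Finset.range n, r^i ≤ 1/(1-r) := by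
  rw [geom_sum_eq (by linarith : r ≠ 1)]
  have h1 : 0 < 1 - r := by linarith
  have : (r^n - 1)/(r-1) = (1-r^n)/(1-r) := by
    rw [← neg_div_neg_eq]; ring_nf
  rw [this, div_le_div_iff₀ h1 h1]
  nlinarith [pow_nonneg hr0 n]

set_option maxHeartbeats 1000000 in
lemma window_lb (b q : ℂ) (hq : ‖q‖ < 1) (hb : ∀ j : ℕ, 1 ≤ j → 1 + b * q ^ j ≠ 0) :
    ∃ c > 0, ∀ s m : ℕ, c ≤ ∏ j ∈ Finset.range m, ‖1 + b * q ^ (s + 1 + j)‖ := by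
  have hq0 : 0 ≤ ‖q‖ := norm_nonneg q
  have h1q : 0 < 1 - ‖q‖ := by linarith
  -- choose N
  have htend : Filter.Tendsto (fun n : ℕ => ‖b‖ * ‖q‖^(n+1) / (1-‖q‖)) atTop (𝓝 0) := by
    have := ((tendsto_pow_atTop_nhds_zero_of_lt_one hq0 hq).const_mul ‖b‖).div_const (1-‖q‖)
    simpa [Function.comp_def] using this.comp (tendsto_add_atTop_nat 1)
  obtain ⟨N, hN⟩ := (htend.eventually (eventually_le_nhds (by norm_num : (0:ℝ) < 1/2))).exists
  -- hN : ‖b‖ * ‖q‖^(N+1) / (1-‖q‖) ≤ 1/2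
  set g : ℕ → ℝ := fun i => min 1 ‖1 + b*q^(i+1)‖ with hg
  have hg0 : ∀ i, 0 < g i := by
    intro i
    apply lt_min one_pos
    exact norm_pos_iff.mpr (hb (i+1) (by omega))
  have hg1 : ∀ i, g i ≤ 1 := fun i => min_le_left _ _
  set δ : ℝ := ∏ i ∈ Finset.range N, g i with hδ
  have hδ0 : 0 < δ := Finset.prod_pos (fun i _ => hg0 i)
  refine ⟨δ * (1/2), by nlinarith, ?_⟩
  intro s m
  set k : ℕ := min m (N - s) with hk
  have hkm : k ≤ m := min_le_left _ _
  have hsplit : (∏ j ∈ Finset.range k, ‖1 + b * q ^ (s+1+j)‖)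
      * (∏ j ∈ Finset.Ico k m, ‖1 + b * q ^ (s+1+j)‖)
      = ∏ j ∈ Finset.range m, ‖1 + b * q ^ (s+1+j)‖ := by
    simp only [Finset.range_eq_Ico]
    exact Finset.prod_Ico_consecutive _ (Nat.zero_le k) hkm
  rw [← hsplit]
  have part1 : δ ≤ ∏ j ∈ Finset.range k, ‖1 + b * q ^ (s+1+j)‖ := by
    have step1 : ∏ j ∈ Finset.range k, g (s+j) ≤ ∏ j ∈ Finset.range k, ‖1 + b * q ^ (s+1+j)‖ := by
      apply Finset.prod_le_prod (fun i _ => (hg0 _).le)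
      intro i _
      calc g (s+i) ≤ ‖1 + b*q^(s+i+1)‖ := min_le_right _ _
      _ = ‖1 + b*q^(s+1+i)‖ := by rw [show s+i+1 = s+1+i from by omega]
    have step2 : δ ≤ ∏ j ∈ Finset.range k, g (s+j) := by
      have hsub : (Finset.Ico s (s+k)) ⊆ Finset.range N := by
        intro i hi
        simp only [Finset.mem_Ico, Finset.mem_range] at *
        omega
      have : ∏ j ∈ Finset.range k, g (s+j) = ∏ i ∈ Finset.Ico s (s+k), g i := by
        rw [Finset.prod_Ico_eq_prod_range]
        simp only [Nat.add_sub_cancel_left]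
      rw [this, hδ, ← Finset.prod_sdiff hsub]
      have hle1 : ∏ i ∈ Finset.range N \ Finset.Ico s (s+k), g i ≤ 1 :=
        Finset.prod_le_one (fun i _ => (hg0 i).le) (fun i _ => hg1 i)
      nlinarith [Finset.prod_pos (fun i (_ : i ∈ Finset.Ico s (s+k)) => hg0 i),
        Finset.prod_pos (fun i (_ : i ∈ Finset.range N \ Finset.Ico s (s+k)) => hg0 i)]
    linarith
  have part2 : (1:ℝ)/2 ≤ ∏ j ∈ Finset.Ico k m, ‖1 + b * q ^ (s+1+j)‖ := by
    rcases Nat.eq_or_lt_of_le hkm with heq | hlt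
    · rw [heq]; simp; norm_num
    -- k < m, so for j ≥ k, s+1+j ≥ N+1
    have hsk : N + 1 ≤ s + 1 + k := by omega
    have hbound : ∀ j ∈ Finset.Ico k m, ‖b‖ * ‖q‖^(s+1+j) ≤ 1 := by
      intro j hj
      simp only [Finset.mem_Ico] at hj
      have h1 : ‖b‖ * ‖q‖^(s+1+j) ≤ ‖b‖ * ‖q‖^(N+1) := by
        apply mul_le_mul_of_nonneg_left _ (norm_nonneg b)
        exact pow_le_pow_of_le_one hq0 hq.le (by omega)
      have h2 : ‖b‖ * ‖q‖^(N+1) ≤ 1/2 * (1-‖q‖) := by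
        rw [div_le_iff₀ h1q] at hN; linarith
      nlinarith
    have hfac : ∀ j ∈ Finset.Ico k m, 1 - ‖b‖*‖q‖^(s+1+j) ≤ ‖1 + b * q ^ (s+1+j)‖ := by
      intro j _
      have := one_sub_norm_le' (b * q^(s+1+j))
      rwa [norm_mul, norm_pow] at this
    have hw : 1 - ∑ j ∈ Finset.Ico k m, ‖b‖*‖q‖^(s+1+j)
        ≤ ∏ j ∈ Finset.Ico k m, (1 - ‖b‖*‖q‖^(s+1+j)) :=
      weier _ _ (fun i _ => by positivity) hbound
    have hsum : ∑ j ∈ Finset.Ico k m, ‖b‖*‖q‖^(s+1+j) ≤ 1/2 := by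
      have e1 : ∑ j ∈ Finset.Ico k m, ‖b‖*‖q‖^(s+1+j)
          = ∑ i ∈ Finset.range (m-k), ‖b‖*‖q‖^(s+1+k+i) := by
        rw [Finset.sum_Ico_eq_sum_range]
        exact Finset.sum_congr rfl (fun i _ => by rw [show s+1+(k+i) = s+1+k+i from by omega])
      rw [e1]
      have e2 : ∑ i ∈ Finset.range (m-k), ‖b‖*‖q‖^(s+1+k+i)
          = ‖b‖*‖q‖^(s+1+k) * ∑ i ∈ Finset.range (m-k), ‖q‖^i := by
        rw [Finset.mul_sum]
        exact Finset.sum_congr rfl (fun i _ => by rw [pow_add]; ring)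
      rw [e2]
      have e3 : ‖b‖*‖q‖^(s+1+k) ≤ ‖b‖*‖q‖^(N+1) :=
        mul_le_mul_of_nonneg_left (pow_le_pow_of_le_one hq0 hq.le hsk) (norm_nonneg b)
      have e4 : ∑ i ∈ Finset.range (m-k), ‖q‖^i ≤ 1/(1-‖q‖) := geo_le _ hq0 hq _
      have e5 : ‖b‖*‖q‖^(N+1) * (1/(1-‖q‖)) ≤ 1/2 := by
        rw [div_le_iff₀ h1q] at hN
        rw [mul_one_div]
        rw [div_le_iff₀ h1q]
        linarith
      calc ‖b‖*‖q‖^(s+1+k) * ∑ i ∈ Finset.range (m-k), ‖q‖^i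
          ≤ ‖b‖*‖q‖^(N+1) * (1/(1-‖q‖)) := by
            apply mul_le_mul e3 e4 (Finset.sum_nonneg (fun i _ => by positivity)) (by positivity)
      _ ≤ 1/2 := e5
    calc (1:ℝ)/2 ≤ 1 - ∑ j ∈ Finset.Ico k m, ‖b‖*‖q‖^(s+1+j) := by linarith
    _ ≤ ∏ j ∈ Finset.Ico k m, (1 - ‖b‖*‖q‖^(s+1+j)) := hw
    _ ≤ ∏ j ∈ Finset.Ico k m, ‖1 + b * q ^ (s+1+j)‖ := by
        apply Finset.prod_le_prod
        · intro i hi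
          have := hbound i hi; nlinarith [norm_nonneg b, pow_nonneg hq0 (s+1+i),
            mul_nonneg (norm_nonneg b) (pow_nonneg hq0 (s+1+i))]
        · exact hfac
  exact mul_le_mul part1 part2 (by norm_num)
    (le_trans hδ0.le part1)

noncomputable def gs (q a b l : ℂ) (n : ℕ) : ℂ :=
  G q (a * q^((n+1)/2)) (b * q^(n/2)) (l * q^n) / ∏ j ∈ Finset.range (n/2), (1 + b*q^(j+1))

noncomputable def alf (q a b l : ℂ) (m : ℕ) : ℂ :=
  if m % 2 = 1 then a * q ^ ((m + 1) / 2) + l * q ^ m else b * q ^ (m / 2) + l * q ^ m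

section main
variable (q a b l : ℂ)

lemma hbshift (hb : ∀ j : ℕ, 1 ≤ j → 1 + b * q ^ j ≠ 0) (t : ℕ) :
    ∀ j : ℕ, 1 ≤ j → 1 + (b * q^t) * q ^ j ≠ 0 := by
  intro j hj
  rw [mul_assoc, ← pow_add]
  exact hb (t+j) (by omega)

lemma id1' (hq : ‖q‖ < 1) (hb : ∀ j : ℕ, 1 ≤ j → 1 + b * q ^ j ≠ 0) (t : ℕ) :
    G q (a*q^t) (b*q^t) (l*q^(2*t)) = G q (a*q^(t+1)) (b*q^t) (l*q^(2*t+1))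
      + ((a*q^t + l*q^(2*t)) * q / (1 + b*q^(t+1)))
        * G q (a*q^(t+1)) (b*q^(t+1)) (l*q^(2*t+2)) := by
  have h := id1 q (a*q^t) (b*q^t) (l*q^(2*t)) hq (hbshift q b hb t)
  rw [show a*q^t*q = a*q^(t+1) by ring, show l*q^(2*t)*q = l*q^(2*t+1) by ring,
    show b*q^t*q = b*q^(t+1) by ring, show l*q^(2*t)*q^2 = l*q^(2*t+2) by ring] at h
  exact h

lemma id2' (hq : ‖q‖ < 1) (hb : ∀ j : ℕ, 1 ≤ j → 1 + b * q ^ j ≠ 0) (t : ℕ) :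
    (1 + b*q^(t+1)) * G q (a*q^(t+1)) (b*q^t) (l*q^(2*t+1))
      = G q (a*q^(t+1)) (b*q^(t+1)) (l*q^(2*t+2))
      + (b*q^(t+1) + l*q^(2*t+2)) * G q (a*q^(t+2)) (b*q^(t+1)) (l*q^(2*t+3)) := by
  have h := id2 q (a*q^(t+1)) (b*q^t) (l*q^(2*t+1)) hq (hbshift q b hb t)
  rw [show b*q^t*q = b*q^(t+1) by ring, show l*q^(2*t+1)*q = l*q^(2*t+2) by ring,
    show a*q^(t+1)*q = a*q^(t+2) by ring, show l*q^(2*t+1)*q^2 = l*q^(2*t+3) by ring,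
    show (b*q^t + l*q^(2*t+1))*q = b*q^(t+1) + l*q^(2*t+2) by ring] at h
  exact h

lemma prodPi_ne (hb : ∀ j : ℕ, 1 ≤ j → 1 + b * q ^ j ≠ 0) (t : ℕ) :
    (∏ j ∈ Finset.range t, ((1:ℂ) + b*q^(j+1))) ≠ 0 :=
  Finset.prod_ne_zero_iff.mpr (fun j _ => hb (j+1) (by omega))

lemma alf_odd (t : ℕ) : alf q a b l (2*t+1) = a*q^(t+1) + l*q^(2*t+1) := by
  unfold alf
  rw [if_pos (by omega), show (2*t+1+1)/2 = t+1 from by omega]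

lemma alf_even (t : ℕ) : alf q a b l (2*(t+1)) = b*q^(t+1) + l*q^(2*t+2) := by
  unfold alf
  rw [if_neg (by omega), show (2*(t+1))/2 = t+1 from by omega,
    show 2*(t+1) = 2*t+2 from by ring]

lemma gs_even (t : ℕ) : gs q a b l (2*t)
    = G q (a*q^t) (b*q^t) (l*q^(2*t)) / ∏ j ∈ Finset.range t, (1+b*q^(j+1)) := by
  unfold gs
  rw [show (2*t+1)/2 = t from by omega, show 2*t/2 = t from by omega]

lemma gs_odd (t : ℕ) : gs q a b l (2*t+1)
    = G q (a*q^(t+1)) (b*q^t) (l*q^(2*t+1)) / ∏ j ∈ Finset.range t, (1+b*q^(j+1)) := by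
  unfold gs
  rw [show (2*t+1+1)/2 = t+1 from by omega, show (2*t+1)/2 = t from by omega]

lemma grec (hq : ‖q‖ < 1) (hb : ∀ j : ℕ, 1 ≤ j → 1 + b * q ^ j ≠ 0) (n : ℕ) :
    gs q a b l n = gs q a b l (n+1) + alf q a b l (n+1) * gs q a b l (n+2) := by
  have hPi : ∀ t : ℕ, (∏ j ∈ Finset.range t, ((1:ℂ) + b*q^(j+1))) ≠ 0 := prodPi_ne q b hb
  have hb1 : ∀ t : ℕ, (1:ℂ) + b*q^(t+1) ≠ 0 := fun t => hb (t+1) (by omega)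
  rcases Nat.even_or_odd n with he | ho
  · obtain ⟨t, ht⟩ := he
    have hn : n = 2*t := by omega
    subst hn
    rw [show 2*t+1+1 = 2*(t+1) from by ring, gs_even q a b l t, gs_odd q a b l t,
      gs_even q a b l (t+1), alf_odd q a b l t,
      show 2*(t+1) = 2*t+2 from by ring, id1' q a b l hq hb t, Finset.prod_range_succ]
    simp only [div_eq_mul_inv, mul_inv]
    ring
  · obtain ⟨t, ht⟩ := ho
    subst ht
    rw [show 2*t+1+1 = 2*(t+1) from by ring, show 2*t+1+2 = 2*(t+1)+1 from by ring,
      gs_odd q a b l t, gs_even q a b l (t+1), gs_odd q a b l (t+1), alf_even q a b l t,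
      show 2*(t+1) = 2*t+2 from by ring, show 2*t+2+1 = 2*t+3 from by omega, show t+1+1 = t+2 from by omega]
    have E := id2' q a b l hq hb t
    have hsum : G q (a*q^(t+1)) (b*q^(t+1)) (l*q^(2*t+2)) / (∏ j ∈ Finset.range (t+1), (1+b*q^(j+1)))
        + (b*q^(t+1) + l*q^(2*t+2)) * (G q (a*q^(t+2)) (b*q^(t+1)) (l*q^(2*t+3)) / ∏ j ∈ Finset.range (t+1), (1+b*q^(j+1)))
        = ((1 + b*q^(t+1)) * G q (a*q^(t+1)) (b*q^t) (l*q^(2*t+1))) / ∏ j ∈ Finset.range (t+1), (1+b*q^(j+1)) := by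
      rw [E]; ring
    rw [hsum, Finset.prod_range_succ, mul_comm (∏ j ∈ Finset.range t, (1+b*q^(j+1))) (1+b*q^(t+1)),
      mul_div_mul_left _ _ (hb1 t)]
end main

section bounds
variable (a b l q : ℂ)

lemma gT_bound (hq : ‖q‖ < 1) (cq cb : ℝ) (hcq0 : 0 < cq) (hcb0 : 0 < cb)
    (hcq : ∀ s m : ℕ, cq ≤ ∏ j ∈ Finset.range m, ‖1 + (-1) * q ^ (s + 1 + j)‖)
    (hcb : ∀ s m : ℕ, cb ≤ ∏ j ∈ Finset.range m, ‖1 + b * q ^ (s + 1 + j)‖)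
    (A L : ℂ) (t m : ℕ) :
    ‖gT q A (b*q^t) L (m+1)‖ ≤ ‖q‖^(m+1) * (‖A‖+‖L‖)^(m+1) / (cq*cb) := by
  have hq0 : 0 ≤ ‖q‖ := norm_nonneg q
  unfold gT
  rw [norm_div, norm_mul, norm_mul, norm_prod, norm_prod, norm_prod]
  have hnum : ‖q ^ ((m+1) * ((m+1) + 1) / 2)‖ * ∏ k ∈ Finset.range (m+1), ‖A + L * q ^ k‖
      ≤ ‖q‖^(m+1) * (‖A‖+‖L‖)^(m+1) := by
    apply mul_le_mul
    · rw [norm_pow]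
      exact pow_le_pow_of_le_one hq0 hq.le (by rw [tri_succ]; omega)
    · calc ∏ k ∈ Finset.range (m+1), ‖A + L * q ^ k‖
          ≤ ∏ k ∈ Finset.range (m+1), (‖A‖ + ‖L‖) := by
            apply Finset.prod_le_prod (fun k _ => norm_nonneg _)
            intro k _
            calc ‖A + L * q ^ k‖ ≤ ‖A‖ + ‖L‖ * ‖q‖^k := by
                  rw [← norm_pow, ← norm_mul]; exact norm_add_le _ _
            _ ≤ ‖A‖ + ‖L‖ * 1 := by gcongr; exact pow_le_one₀ hq0 hq.le
            _ = ‖A‖ + ‖L‖ := by ring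
      _ = (‖A‖ + ‖L‖)^(m+1) := by rw [Finset.prod_const, Finset.card_range]
    · exact Finset.prod_nonneg (fun k _ => norm_nonneg _)
    · positivity
  have hden : cq * cb ≤ (∏ j ∈ Finset.range (m+1), ‖1 - q ^ (j + 1)‖)
      * ∏ j ∈ Finset.range (m+1), ‖1 + b*q^t * q ^ (j + 1)‖ := by
    apply mul_le_mul
    · calc cq ≤ ∏ j ∈ Finset.range (m+1), ‖1 + (-1) * q ^ (0 + 1 + j)‖ := hcq 0 (m+1)
      _ = ∏ j ∈ Finset.range (m+1), ‖1 - q ^ (j + 1)‖ := by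
          apply Finset.prod_congr rfl
          intro j _
          rw [show (0:ℕ)+1+j = j+1 from by omega]
          congr 1
          ring
    · calc cb ≤ ∏ j ∈ Finset.range (m+1), ‖1 + b * q ^ (t + 1 + j)‖ := hcb t (m+1)
      _ = ∏ j ∈ Finset.range (m+1), ‖1 + b*q^t * q ^ (j + 1)‖ := by
          apply Finset.prod_congr rfl
          intro j _
          rw [show t+1+j = t+(j+1) from by omega, pow_add]
          congr 1
          ring
    · exact hcb0.le
    · exact Finset.prod_nonneg (fun k _ => norm_nonneg _)
  exact div_le_div₀ (by positivity) hnum (by positivity) hden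

set_option maxHeartbeats 1000000 in
lemma gnum_one (hq : ‖q‖ < 1) (hb : ∀ j : ℕ, 1 ≤ j → 1 + b * q ^ j ≠ 0) :
    Filter.Tendsto (fun n : ℕ => G q (a*q^((n+1)/2)) (b*q^(n/2)) (l*q^n)) atTop (𝓝 1) := by
  have hq0 : 0 ≤ ‖q‖ := norm_nonneg q
  obtain ⟨cq, hcq0, hcq⟩ := window_lb (-1) q hq (fun j hj => by
    rw [neg_one_mul, ← sub_eq_add_neg]
    have := one_sub_pow_ne q hq (j-1)
    rwa [show j-1+1 = j from by omega] at this)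
  obtain ⟨cb, hcb0, hcb⟩ := window_lb b q hq hb
  -- the majorant sequence
  set e : ℕ → ℝ := fun n => ‖q‖*(‖a‖+‖l‖)*‖q‖^(n/2) with he
  have hdiv2 : Filter.Tendsto (fun n : ℕ => n / 2) atTop atTop :=
    tendsto_atTop_atTop.mpr (fun c => ⟨2*c, fun x hx => by omega⟩)
  have hetend : Filter.Tendsto e atTop (𝓝 0) := by
    have h := (tendsto_pow_atTop_nhds_zero_of_lt_one hq0 hq).comp hdiv2
    have := h.const_mul (‖q‖*(‖a‖+‖l‖))
    simpa [he, Function.comp] using this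
  have hkey : ∀ᶠ n : ℕ in atTop,
      ‖G q (a*q^((n+1)/2)) (b*q^(n/2)) (l*q^n) - 1‖ ≤ 2/(cq*cb) * e n := by
    filter_upwards [hetend.eventually (eventually_le_nhds (by norm_num : (0:ℝ) < 1/2))] with n hen
    set A := a*q^((n+1)/2)
    set L := l*q^n
    have hAL : ‖q‖ * (‖A‖ + ‖L‖) ≤ e n := by
      have h1 : ‖A‖ ≤ ‖a‖ * ‖q‖^(n/2) := by
        rw [norm_mul, norm_pow]
        exact mul_le_mul_of_nonneg_left (pow_le_pow_of_le_one hq0 hq.le (by omega)) (norm_nonneg a)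
      have h2 : ‖L‖ ≤ ‖l‖ * ‖q‖^(n/2) := by
        rw [norm_mul, norm_pow]
        exact mul_le_mul_of_nonneg_left (pow_le_pow_of_le_one hq0 hq.le (by omega)) (norm_nonneg l)
      have : ‖A‖ + ‖L‖ ≤ (‖a‖+‖l‖) * ‖q‖^(n/2) := by rw [add_mul]; exact add_le_add h1 h2
      calc ‖q‖ * (‖A‖ + ‖L‖) ≤ ‖q‖ * ((‖a‖+‖l‖) * ‖q‖^(n/2)) :=
            mul_le_mul_of_nonneg_left this hq0
      _ = e n := by rw [he]; ring
    have hsum1 := summable_norm_gT q A (b*q^(n/2)) L hq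
    have hsum1s : Summable (fun m => ‖gT q A (b*q^(n/2)) L (m+1)‖) :=
      (summable_nat_add_iff 1).mpr hsum1
    have hG1 : G q A (b*q^(n/2)) L - 1 = ∑' m, gT q A (b*q^(n/2)) L (m+1) := by
      rw [G_eq, Summable.tsum_eq_zero_add hsum1.of_norm, gT_zero]
      ring
    rw [hG1]
    have hterm : ∀ m : ℕ, ‖gT q A (b*q^(n/2)) L (m+1)‖ ≤ (e n/(cq*cb)) * (1/2)^m := by
      intro m
      have h1 := gT_bound b q hq cq cb hcq0 hcb0 hcq hcb A L (n/2) m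
      have h2 : ‖q‖^(m+1) * (‖A‖+‖L‖)^(m+1) = (‖q‖*(‖A‖+‖L‖))^(m+1) := by rw [mul_pow]
      have h3 : (‖q‖*(‖A‖+‖L‖))^(m+1) ≤ e n * (1/2)^m := by
        calc (‖q‖*(‖A‖+‖L‖))^(m+1) ≤ (e n)^(m+1) :=
              pow_le_pow_left₀ (by positivity) hAL (m+1)
        _ = e n * (e n)^m := by ring
        _ ≤ e n * (1/2)^m := by
            apply mul_le_mul_of_nonneg_left (pow_le_pow_left₀ (by positivity) hen m)
            positivity
      calc ‖gT q A (b*q^(n/2)) L (m+1)‖ ≤ ‖q‖^(m+1) * (‖A‖+‖L‖)^(m+1) / (cq*cb) := h1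
      _ = (‖q‖*(‖A‖+‖L‖))^(m+1) / (cq*cb) := by rw [h2]
      _ ≤ (e n * (1/2)^m) / (cq*cb) := div_le_div₀ (by positivity) h3 (by positivity) le_rfl
      _ = (e n/(cq*cb)) * (1/2)^m := by ring
    have hmaj : Summable (fun m : ℕ => (e n/(cq*cb)) * (1/2)^m) :=
      (summable_geometric_two).mul_left _
    calc ‖∑' m, gT q A (b*q^(n/2)) L (m+1)‖ ≤ ∑' m, ‖gT q A (b*q^(n/2)) L (m+1)‖ :=
          norm_tsum_le_tsum_norm hsum1s
    _ ≤ ∑' m : ℕ, (e n/(cq*cb)) * (1/2)^m := Summable.tsum_le_tsum hterm hsum1s hmaj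
    _ = (e n/(cq*cb)) * ∑' m : ℕ, (1/2:ℝ)^m := tsum_mul_left
    _ = (e n/(cq*cb)) * 2 := by rw [tsum_geometric_two]
    _ = 2/(cq*cb) * e n := by ring
  have h0 : Filter.Tendsto (fun n : ℕ => G q (a*q^((n+1)/2)) (b*q^(n/2)) (l*q^n) - 1) atTop (𝓝 0) := by
    apply squeeze_zero_norm' hkey
    have := hetend.const_mul (2/(cq*cb))
    simpa using this
  have := h0.add_const 1
  simpa using this
end bounds

section cf
variable (a b l q : ℂ)

lemma sqrt_norm_lt_one (hq : ‖q‖ < 1) : Real.sqrt ‖q‖ < 1 := by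
  nlinarith [Real.sq_sqrt (norm_nonneg q), Real.sqrt_nonneg ‖q‖]

lemma pow_r_le (hq : ‖q‖ < 1) (e m : ℕ) (h2 : m ≤ 2*e) : ‖q‖^e ≤ (Real.sqrt ‖q‖)^m := by
  have h1 : ‖q‖^e = (Real.sqrt ‖q‖)^(2*e) := by
    rw [pow_mul, Real.sq_sqrt (norm_nonneg q)]
  rw [h1]
  exact pow_le_pow_of_le_one (Real.sqrt_nonneg _) (sqrt_norm_lt_one q hq).le h2

lemma alf_bound (hq : ‖q‖ < 1) (m : ℕ) :
    ‖alf q a b l m‖ ≤ (‖a‖+‖b‖+‖l‖) * (Real.sqrt ‖q‖)^m := by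
  have hs0 : 0 ≤ Real.sqrt ‖q‖ := Real.sqrt_nonneg _
  have hlq : ‖l * q^m‖ ≤ ‖l‖ * (Real.sqrt ‖q‖)^m := by
    rw [norm_mul, norm_pow]
    exact mul_le_mul_of_nonneg_left (pow_r_le q hq m m (by omega)) (norm_nonneg l)
  unfold alf
  split_ifs with h
  · have ha : ‖a * q^((m+1)/2)‖ ≤ ‖a‖ * (Real.sqrt ‖q‖)^m := by
      rw [norm_mul, norm_pow]
      exact mul_le_mul_of_nonneg_left (pow_r_le q hq ((m+1)/2) m (by omega)) (norm_nonneg a)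
    calc ‖a * q^((m+1)/2) + l * q^m‖ ≤ ‖a * q^((m+1)/2)‖ + ‖l * q^m‖ := norm_add_le _ _
    _ ≤ ‖a‖ * (Real.sqrt ‖q‖)^m + ‖l‖ * (Real.sqrt ‖q‖)^m := add_le_add ha hlq
    _ ≤ (‖a‖+‖b‖+‖l‖) * (Real.sqrt ‖q‖)^m := by nlinarith [norm_nonneg b, pow_nonneg hs0 m]
  · have hmod : m % 2 = 0 := by omega
    have hbb : ‖b * q^(m/2)‖ ≤ ‖b‖ * (Real.sqrt ‖q‖)^m := by
      rw [norm_mul, norm_pow]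
      exact mul_le_mul_of_nonneg_left (pow_r_le q hq (m/2) m (by omega)) (norm_nonneg b)
    calc ‖b * q^(m/2) + l * q^m‖ ≤ ‖b * q^(m/2)‖ + ‖l * q^m‖ := norm_add_le _ _
    _ ≤ ‖b‖ * (Real.sqrt ‖q‖)^m + ‖l‖ * (Real.sqrt ‖q‖)^m := add_le_add hbb hlq
    _ ≤ (‖a‖+‖b‖+‖l‖) * (Real.sqrt ‖q‖)^m := by nlinarith [norm_nonneg a, pow_nonneg hs0 m]

lemma alf_tendsto (hq : ‖q‖ < 1) :
    Filter.Tendsto (fun n : ℕ => alf q a b l (n+1)) atTop (𝓝 0) := by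
  apply squeeze_zero_norm (fun n => alf_bound a b l q hq (n+1))
  have h := (tendsto_pow_atTop_nhds_zero_of_lt_one (Real.sqrt_nonneg ‖q‖)
    (sqrt_norm_lt_one q hq)).const_mul (‖a‖+‖b‖+‖l‖)
  simpa [Function.comp_def] using h.comp (tendsto_add_atTop_nat 1)

lemma rec_bound (hq : ‖q‖ < 1) (X : ℕ → ℂ) (h0 : ‖X 0‖ ≤ 1) (h1 : ‖X 1‖ ≤ 1)
    (hrec : ∀ n, X (n+2) = X (n+1) + alf q a b l (n+1) * X n) :
    ∀ n, ‖X n‖ ≤ Real.exp ((‖a‖+‖b‖+‖l‖) * Real.sqrt ‖q‖ / (1 - Real.sqrt ‖q‖)) := by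
  set s := Real.sqrt ‖q‖ with hs
  set K := ‖a‖+‖b‖+‖l‖ with hK
  have hs0 : 0 ≤ s := Real.sqrt_nonneg _
  have hs1 : s < 1 := sqrt_norm_lt_one q hq
  have hK0 : 0 ≤ K := by positivity
  have key : ∀ n, ‖X n‖ ≤ ∏ j ∈ Finset.range n, (1 + ‖alf q a b l (j+1)‖)
      ∧ ‖X (n+1)‖ ≤ ∏ j ∈ Finset.range n, (1 + ‖alf q a b l (j+1)‖) := by
    intro n
    induction n with
    | zero => simpa using ⟨h0, h1⟩
    | succ n ih =>
      obtain ⟨ih1, ih2⟩ := ih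
      have hP0 : (0:ℝ) ≤ ∏ j ∈ Finset.range n, (1 + ‖alf q a b l (j+1)‖) :=
        Finset.prod_nonneg (fun j _ => by positivity)
      constructor
      · rw [Finset.prod_range_succ]
        calc ‖X (n+1)‖ ≤ ∏ j ∈ Finset.range n, (1 + ‖alf q a b l (j+1)‖) := ih2
        _ ≤ _ := by nlinarith [norm_nonneg (alf q a b l (n+1))]
      · rw [hrec n, Finset.prod_range_succ]
        calc ‖X (n+1) + alf q a b l (n+1) * X n‖
            ≤ ‖X (n+1)‖ + ‖alf q a b l (n+1)‖ * ‖X n‖ := by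
              rw [← norm_mul]; exact norm_add_le _ _
        _ ≤ _ := by nlinarith [norm_nonneg (alf q a b l (n+1))]
  intro n
  have h2 : ∏ j ∈ Finset.range n, (1 + ‖alf q a b l (j+1)‖)
      ≤ Real.exp (∑ j ∈ Finset.range n, ‖alf q a b l (j+1)‖) := by
    rw [Real.exp_sum]
    apply Finset.prod_le_prod (fun j _ => by positivity)
    intro j _
    have := Real.add_one_le_exp ‖alf q a b l (j+1)‖
    linarith
  have h3 : ∑ j ∈ Finset.range n, ‖alf q a b l (j+1)‖ ≤ K * s / (1-s) := by
    calc ∑ j ∈ Finset.range n, ‖alf q a b l (j+1)‖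
        ≤ ∑ j ∈ Finset.range n, K * s^(j+1) :=
          Finset.sum_le_sum (fun j _ => alf_bound a b l q hq (j+1))
    _ = K * s * ∑ j ∈ Finset.range n, s^j := by
        rw [Finset.mul_sum]
        exact Finset.sum_congr rfl (fun j _ => by rw [pow_succ]; ring)
    _ ≤ K * s * (1/(1-s)) := by
        apply mul_le_mul_of_nonneg_left (geo_le s hs0 hs1 n) (by positivity)
    _ = K * s / (1-s) := by ring
  calc ‖X n‖ ≤ ∏ j ∈ Finset.range n, (1 + ‖alf q a b l (j+1)‖) := (key n).1
  _ ≤ Real.exp (∑ j ∈ Finset.range n, ‖alf q a b l (j+1)‖) := h2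
  _ ≤ Real.exp (K * s / (1-s)) := Real.exp_le_exp.mpr h3

lemma cfNum_rec (m : ℕ) : cfNum (alf q a b l) (fun _ => 1) (m+2)
    = cfNum (alf q a b l) (fun _ => 1) (m+1) + alf q a b l (m+1) * cfNum (alf q a b l) (fun _ => 1) m := by
  show (fun _ => (1:ℂ)) (m+1) * _ + _ = _
  rw [one_mul]

lemma cfDen_rec (m : ℕ) : cfDen (alf q a b l) (fun _ => 1) (m+2)
    = cfDen (alf q a b l) (fun _ => 1) (m+1) + alf q a b l (m+1) * cfDen (alf q a b l) (fun _ => 1) m := by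
  show (fun _ => (1:ℂ)) (m+1) * _ + _ = _
  rw [one_mul]

lemma cfNum_bdd (hq : ‖q‖ < 1) : ∀ n, ‖cfNum (alf q a b l) (fun _ => 1) n‖
    ≤ Real.exp ((‖a‖+‖b‖+‖l‖) * Real.sqrt ‖q‖ / (1 - Real.sqrt ‖q‖)) :=
  rec_bound a b l q hq _ (by simp [cfNum]) (by simp [cfNum]) (cfNum_rec a b l q)

lemma cfDen_bdd (hq : ‖q‖ < 1) : ∀ n, ‖cfDen (alf q a b l) (fun _ => 1) n‖
    ≤ Real.exp ((‖a‖+‖b‖+‖l‖) * Real.sqrt ‖q‖ / (1 - Real.sqrt ‖q‖)) :=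
  rec_bound a b l q hq _ (by simp [cfDen]) (by simp [cfDen]) (cfDen_rec a b l q)
end cf

section final
variable (a b l q : ℂ)

lemma relA (hq : ‖q‖ < 1) (hb : ∀ j : ℕ, 1 ≤ j → 1 + b * q ^ j ≠ 0) : ∀ n,
    cfNum (alf q a b l) (fun _ => 1) (n+1) * gs q a b l (n+1)
      + alf q a b l (n+1) * (cfNum (alf q a b l) (fun _ => 1) n * gs q a b l (n+2))
      = gs q a b l 0 := by
  intro n
  induction n with
  | zero =>
    have hg := grec q a b l hq hb 0
    simp only [cfNum]
    linear_combination -hg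
  | succ n ih =>
    have hg := grec q a b l hq hb (n+1)
    rw [cfNum_rec]
    linear_combination ih - cfNum (alf q a b l) (fun _ => 1) (n+1) * hg

lemma relB (hq : ‖q‖ < 1) (hb : ∀ j : ℕ, 1 ≤ j → 1 + b * q ^ j ≠ 0) : ∀ n,
    cfDen (alf q a b l) (fun _ => 1) (n+1) * gs q a b l (n+1)
      + alf q a b l (n+1) * (cfDen (alf q a b l) (fun _ => 1) n * gs q a b l (n+2))
      = gs q a b l 1 := by
  intro n
  induction n with
  | zero =>
    simp only [cfDen]
    ring
  | succ n ih =>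
    have hg := grec q a b l hq hb (n+1)
    rw [cfDen_rec]
    linear_combination ih - cfDen (alf q a b l) (fun _ => 1) (n+1) * hg

theorem stmt0' (hq : ‖q‖ < 1)
    (hb : ∀ j : ℕ, 1 ≤ j → 1 + b * q ^ j ≠ 0)
    (hG : G q (a * q) b (l * q) ≠ 0) :
    CFConvergesTo
      (fun m => if m % 2 = 1 then a * q ^ ((m + 1) / 2) + l * q ^ m
        else b * q ^ (m / 2) + l * q ^ m)
      (fun _ => 1)
      (G q a b l / G q (a * q) b (l * q)) := by
  have hq' : ‖q‖ < 1 := hq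
  have half : (fun m => if m % 2 = 1 then a * q ^ ((m + 1) / 2) + l * q ^ m
      else b * q ^ (m / 2) + l * q ^ m) = alf q a b l := rfl
  rw [half]
  have g0 : gs q a b l 0 = G q a b l := by norm_num [gs]
  have g1 : gs q a b l 1 = G q (a*q) b (l*q) := by norm_num [gs]
  have hg1ne : gs q a b l 1 ≠ 0 := by rw [g1]; exact hG
  obtain ⟨cb, hcb0, hcb⟩ := window_lb b q hq' hb
  -- eventual facts about gs
  have hgnum := gnum_one a b l q hq' hb
  have hnev : ∀ᶠ n : ℕ in atTop, ‖G q (a*q^((n+1)/2)) (b*q^(n/2)) (l*q^n) - 1‖ ≤ 1/2 := by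
    have h := (hgnum.sub_const 1).norm
    simp only [sub_self, norm_zero] at h
    exact h.eventually (eventually_le_nhds (by norm_num))
  have hPibd : ∀ n : ℕ, cb ≤ ‖∏ j ∈ Finset.range (n/2), ((1:ℂ) + b*q^(j+1))‖ := by
    intro n
    rw [norm_prod]
    calc cb ≤ ∏ j ∈ Finset.range (n/2), ‖1 + b * q ^ (0+1+j)‖ := hcb 0 (n/2)
    _ = ∏ j ∈ Finset.range (n/2), ‖1 + b*q^(j+1)‖ := by
        apply Finset.prod_congr rfl
        intro j _
        rw [show (0:ℕ)+1+j = j+1 from by omega]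
  have hgs_ne : ∀ᶠ n : ℕ in atTop, gs q a b l n ≠ 0 := by
    filter_upwards [hnev] with n hn
    unfold gs
    apply div_ne_zero _ (prodPi_ne q b hb _)
    intro h0
    rw [h0] at hn
    simp at hn
    linarith
  have hgs_bd : ∀ᶠ n : ℕ in atTop, ‖gs q a b l n‖ ≤ 2/cb := by
    filter_upwards [hnev] with n hn
    unfold gs
    rw [norm_div]
    have hnum : ‖G q (a*q^((n+1)/2)) (b*q^(n/2)) (l*q^n)‖ ≤ 2 := by
      have := norm_sub_norm_le (G q (a*q^((n+1)/2)) (b*q^(n/2)) (l*q^n)) 1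
      rw [norm_one] at this
      linarith
    exact div_le_div₀ (by norm_num) hnum hcb0 (hPibd n)
  -- tendsto of products
  set C := Real.exp ((‖a‖+‖b‖+‖l‖) * Real.sqrt ‖q‖ / (1 - Real.sqrt ‖q‖)) with hC
  have hC0 : 0 ≤ C := Real.exp_nonneg _
  have halft := by exact (tendsto_pow_atTop_nhds_zero_of_lt_one (Real.sqrt_nonneg ‖q‖)
    (sqrt_norm_lt_one q hq'))
  have hzero : ∀ X : ℕ → ℂ, (∀ n, ‖X n‖ ≤ C) →
      Filter.Tendsto (fun n => alf q a b l (n+1) * (X n * gs q a b l (n+2))) atTop (𝓝 0) := by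
    intro X hX
    apply squeeze_zero_norm'
      (a := fun n => ((‖a‖+‖b‖+‖l‖) * (Real.sqrt ‖q‖)^(n+1)) * (C * (2/cb)))
    · filter_upwards [(tendsto_add_atTop_nat 2).eventually hgs_bd] with n hn
      rw [norm_mul, norm_mul]
      apply mul_le_mul (alf_bound a b l q hq' (n+1))
      · apply mul_le_mul (hX n) hn (norm_nonneg _) hC0
      · positivity
      · positivity
    · have h1 := (halft.const_mul (‖a‖+‖b‖+‖l‖)).mul_const (C * (2/cb))
      simp only [mul_zero, zero_mul] at h1
      have := h1.comp (tendsto_add_atTop_nat 1)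
      simpa [Function.comp_def] using this
  have hA : Filter.Tendsto (fun n => cfNum (alf q a b l) (fun _ => 1) (n+1) * gs q a b l (n+1))
      atTop (𝓝 (gs q a b l 0)) := by
    have hz := hzero _ (cfNum_bdd a b l q hq')
    have : (fun n => cfNum (alf q a b l) (fun _ => 1) (n+1) * gs q a b l (n+1))
        = fun n => gs q a b l 0 - alf q a b l (n+1) * (cfNum (alf q a b l) (fun _ => 1) n * gs q a b l (n+2)) := by
      funext n
      linear_combination relA a b l q hq' hb n
    rw [this]
    have := (tendsto_const_nhds (x := gs q a b l 0) (f := atTop (α := ℕ))).sub hz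
    simpa using this
  have hB : Filter.Tendsto (fun n => cfDen (alf q a b l) (fun _ => 1) (n+1) * gs q a b l (n+1))
      atTop (𝓝 (gs q a b l 1)) := by
    have hz := hzero _ (cfDen_bdd a b l q hq')
    have : (fun n => cfDen (alf q a b l) (fun _ => 1) (n+1) * gs q a b l (n+1))
        = fun n => gs q a b l 1 - alf q a b l (n+1) * (cfDen (alf q a b l) (fun _ => 1) n * gs q a b l (n+2)) := by
      funext n
      linear_combination relB a b l q hq' hb n
    rw [this]
    have := (tendsto_const_nhds (x := gs q a b l 1) (f := atTop (α := ℕ))).sub hz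
    simpa using this
  have hdiv := hA.div hB hg1ne
  unfold CFConvergesTo
  rw [← g0, ← g1]
  apply Filter.Tendsto.congr' _ hdiv
  filter_upwards [(tendsto_add_atTop_nat 1).eventually hgs_ne] with n hn
  exact mul_div_mul_right _ _ hn
end final

end RamanujanCF

theorem stmt0 (a b l q : ℂ) (hq : ‖q‖ < 1)
    (hb : ∀ j : ℕ, 1 ≤ j → 1 + b * q ^ j ≠ 0)
    (hG : G q (a * q) b (l * q) ≠ 0) :
    CFConvergesTo
      (fun m => if m % 2 = 1 then a * q ^ ((m + 1) / 2) + l * q ^ m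
        else b * q ^ (m / 2) + l * q ^ m)
      (fun _ => 1)
      (G q a b l / G q (a * q) b (l * q)) :=
  RamanujanCF.stmt0' a b l q hq hb hG
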